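/- For every x ∈ ℝ^n, the limit as p → ∞ of (Σ_{i∈I} x_i^{2p+1})^{1/(2p+1)} (real odd roots) exists and equals F_I(x), the n-ary extension ⊞_{i∈I} x_i. -/

import Mathlib

open scoped Classical

/-- ξ_I[x](α): signed count of occurrences of α among the x i, i ∈ I. -/
noncomputable def xiF {ι : Type*} (I : Finset ι) (x : ι → ℝ) (α : ℝ) : ℤ :=
  ((I.filter fun i => x i = α).card : ℤ) - ((I.filter fun i => x i = -α).card : ℤ)

/-- the n-ary limit operation F_I, i.e. ⊞_{i∈I} x_i. -/
noncomputable def FF {ι : Type*} (I : Finset ι) (x : ι → ℝ) : ℝ :=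
  if h : (I.filter fun j => xiF I x (x j) ≠ 0).Nonempty then
    if 0 < xiF I x ((I.filter fun j => xiF I x (x j) ≠ 0).sup' h fun i => |x i|) then
      (I.filter fun j => xiF I x (x j) ≠ 0).sup' h x
    else if xiF I x ((I.filter fun j => xiF I x (x j) ≠ 0).sup' h fun i => |x i|) < 0 then
      (I.filter fun j => xiF I x (x j) ≠ 0).inf' h x
    else 0
  else 0

lemma xiF_neg {ι : Type*} (I : Finset ι) (x : ι → ℝ) (α : ℝ) :
    xiF I x (-α) = - xiF I x α := by
  simp [xiF, neg_neg]

lemma xiF_abs_ne {ι : Type*} (I : Finset ι) (x : ι → ℝ) {i : ι}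
    (h : xiF I x (x i) ≠ 0) : xiF I x |x i| ≠ 0 := by
  rcases abs_choice (x i) with hc | hc
  · rwa [hc]
  · rw [hc, xiF_neg]; simpa using h

lemma xiF_abs_ne' {ι : Type*} (I : Finset ι) (x : ι → ℝ) {i : ι}
    (h : xiF I x |x i| ≠ 0) : xiF I x (x i) ≠ 0 := by
  rcases abs_choice (x i) with hc | hc
  · rwa [hc] at h
  · rw [hc, xiF_neg] at h; simpa using h

lemma group_sum {ι : Type*} (I : Finset ι) (x : ι → ℝ) (f : ℝ → ℝ)
    (hf : ∀ a, f (-a) = -f a) :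
    ∑ i ∈ I, f (x i)
      = ∑ α ∈ (I.image fun i => |x i|).filter (fun a => 0 < a), (xiF I x α : ℝ) * f α := by
  have hf0 : f 0 = 0 := by have := hf 0; simp at this; linarith
  rw [← Finset.sum_fiberwise_of_maps_to
      (fun i hi => Finset.mem_image_of_mem (fun i => |x i|) hi) (fun i => f (x i)),
    Finset.sum_filter]
  refine Finset.sum_congr rfl ?_
  intro β hβ
  by_cases hpos : 0 < β
  · rw [if_pos hpos]
    have hsplit : I.filter (fun i => |x i| = β)
        = (I.filter fun i => x i = β) ∪ (I.filter fun i => x i = -β) := by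
      ext i
      simp only [Finset.mem_filter, Finset.mem_union]
      constructor
      · rintro ⟨hi, habs⟩
        rcases abs_choice (x i) with hc | hc
        · exact Or.inl ⟨hi, by rw [← hc, habs]⟩
        · exact Or.inr ⟨hi, by rw [← neg_eq_iff_eq_neg] at hc; rw [← hc, habs]⟩
      · rintro (⟨hi, h⟩ | ⟨hi, h⟩) <;>
          simp [hi, h, abs_of_pos hpos, abs_of_neg (neg_neg_iff_pos.mpr hpos)]
    have hdisj : Disjoint (I.filter fun i => x i = β) (I.filter fun i => x i = -β) := by
      rw [Finset.disjoint_left]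
      intro i hi1 hi2
      have h1 := (Finset.mem_filter.mp hi1).2
      have h2 := (Finset.mem_filter.mp hi2).2
      rw [h1] at h2
      nlinarith
    rw [hsplit, Finset.sum_union hdisj]
    have h1 : ∑ i ∈ I.filter (fun i => x i = β), f (x i)
        = ((I.filter fun i => x i = β).card : ℝ) * f β := by
      rw [Finset.sum_congr rfl (fun i hi => by
        rw [(Finset.mem_filter.mp hi).2]), Finset.sum_const, nsmul_eq_mul]
    have h2 : ∑ i ∈ I.filter (fun i => x i = -β), f (x i)
        = ((I.filter fun i => x i = -β).card : ℝ) * (- f β) := by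
      rw [Finset.sum_congr rfl (fun i hi => by
        rw [(Finset.mem_filter.mp hi).2, hf]), Finset.sum_const, nsmul_eq_mul]
    rw [h1, h2, xiF]
    push_cast
    ring
  · rw [if_neg hpos]
    have hβ0 : β = 0 := by
      rcases Finset.mem_image.mp hβ with ⟨i, _, rfl⟩
      have := abs_nonneg (x i)
      linarith
    refine Finset.sum_eq_zero fun i hi => ?_
    have : |x i| = β := (Finset.mem_filter.mp hi).2
    have : x i = 0 := by rw [hβ0] at this; exact abs_eq_zero.mp this
    rw [this, hf0]

theorem stmt_9 {n : ℕ} (x : Fin n → ℝ) (I : Finset (Fin n)) (hI : I.Nonempty)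
    (r : ℕ → ℝ)
    (hr : ∀ p : ℕ, (r p) ^ (2 * p + 1) = ∑ i ∈ I, (x i) ^ (2 * p + 1)) :
    Filter.Tendsto r Filter.atTop (nhds (FF I x)) := by
  classical
  set J : Finset (Fin n) := I.filter (fun j => xiF I x (x j) ≠ 0) with hJ
  have hodd : ∀ p : ℕ, Odd (2 * p + 1) := fun p => ⟨p, by ring⟩
  have hgroup : ∀ p : ℕ, ∑ i ∈ I, (x i) ^ (2 * p + 1)
      = ∑ α ∈ (I.image fun i => |x i|).filter (fun a => 0 < a),
          (xiF I x α : ℝ) * α ^ (2 * p + 1) :=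
    fun p => group_sum I x (fun a => a ^ (2 * p + 1)) (fun a => (hodd p).neg_pow a)
  by_cases h : J.Nonempty
  · -- main case
    set V : Finset ℝ := (I.image fun i => |x i|).filter (fun a => 0 < a) with hV
    set M : ℝ := J.sup' h (fun i => |x i|) with hM
    obtain ⟨j0, hj0J, hj0⟩ := Finset.exists_mem_eq_sup' h (fun i => |x i|)
    have hj0' : M = |x j0| := hM.trans hj0
    have hj0I : j0 ∈ I := (Finset.mem_filter.mp hj0J).1
    have hj0ξ : xiF I x (x j0) ≠ 0 := (Finset.mem_filter.mp hj0J).2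
    have hMpos : 0 < M := by
      rw [hj0']
      exact abs_pos.mpr (fun h0 : x j0 = 0 => hj0ξ (by simp [h0, xiF]))
    have hξM : xiF I x M ≠ 0 := by
      rw [hj0']; exact xiF_abs_ne I x hj0ξ
    have hMmem : M ∈ V := by
      rw [hV, Finset.mem_filter]
      exact ⟨by rw [hj0']; exact Finset.mem_image_of_mem _ hj0I, hMpos⟩
    have hle : ∀ α ∈ V, xiF I x α ≠ 0 → α ≤ M := by
      intro α hα hξα
      rcases Finset.mem_filter.mp hα with ⟨hαim, hαpos⟩
      rcases Finset.mem_image.mp hαim with ⟨i, hiI, rfl⟩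
      have hi : xiF I x (x i) ≠ 0 := xiF_abs_ne' I x hξα
      exact Finset.le_sup' (fun i => |x i|) (Finset.mem_filter.mpr ⟨hiI, hi⟩)
    -- c_p
    set c : ℝ := (xiF I x M : ℝ) with hc
    have hcne : c ≠ 0 := by
      rw [hc]; exact_mod_cast hξM
    set tail : ℕ → ℝ := fun p => ∑ α ∈ V.erase M, (xiF I x α : ℝ) * (α / M) ^ (2 * p + 1)
      with htail
    have hsum : ∀ p, ∑ i ∈ I, (x i) ^ (2 * p + 1) = (c + tail p) * M ^ (2 * p + 1) := by
      intro p
      rw [hgroup p, ← Finset.add_sum_erase V _ hMmem]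
      rw [add_mul, Finset.sum_mul]
      congr 1
      refine Finset.sum_congr rfl fun α hα => ?_
      rw [div_pow, mul_assoc, div_mul_cancel₀]
      exact pow_ne_zero _ (ne_of_gt hMpos)
    have htail0 : Filter.Tendsto tail Filter.atTop (nhds 0) := by
      have key : Filter.Tendsto
          (fun p => ∑ α ∈ V.erase M, (xiF I x α : ℝ) * (α / M) ^ (2 * p + 1))
          Filter.atTop (nhds (∑ α ∈ V.erase M, (0:ℝ))) := by
        refine tendsto_finset_sum _ (fun α hα => ?_)
        by_cases hξα : xiF I x α = 0
        · simp [hξα]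
        · have hαV : α ∈ V := Finset.mem_of_mem_erase hα
          have hαM : α < M :=
            lt_of_le_of_ne (hle α hαV hξα) (Finset.ne_of_mem_erase hα)
          have hαpos : 0 < α := (Finset.mem_filter.mp hαV).2
          have h01 : 0 ≤ α / M := le_of_lt (div_pos hαpos hMpos)
          have h1 : α / M < 1 := (div_lt_one hMpos).mpr hαM
          have hbase : Filter.Tendsto (fun m : ℕ => (α / M) ^ m) Filter.atTop (nhds 0) :=
            tendsto_pow_atTop_nhds_zero_of_lt_one h01 h1
          have hexp : Filter.Tendsto (fun p : ℕ => 2 * p + 1) Filter.atTop Filter.atTop :=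
            Filter.tendsto_atTop_mono (fun p => by simp [id]; omega) Filter.tendsto_id
          have := (hbase.comp hexp).const_mul ((xiF I x α : ℝ))
          simpa [Function.comp] using this
      simpa [htail] using key
    have hcp : Filter.Tendsto (fun p => c + tail p) Filter.atTop (nhds c) := by
      have := htail0.const_add c
      simpa using this
    -- express r in closed form
    have hrval : ∀ p : ℕ, r p
        = (if 0 ≤ c + tail p then (1:ℝ) else -1)
            * (M * |c + tail p| ^ (((2 * (p:ℝ) + 1))⁻¹)) := by
      intro p
      apply (Odd.strictMono_pow (R := ℝ) (hodd p)).injective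
      simp only
      rw [hr p, hsum p]
      rw [mul_pow, mul_pow]
      have hcast : ((2 * p + 1 : ℕ) : ℝ) = 2 * (p:ℝ) + 1 := by push_cast; ring
      have hrpow : (|c + tail p| ^ (((2 * (p:ℝ) + 1))⁻¹)) ^ (2 * p + 1) = |c + tail p| := by
        rw [← Real.rpow_natCast (|c + tail p| ^ (((2 * (p:ℝ) + 1))⁻¹)) (2 * p + 1),
          ← Real.rpow_mul (abs_nonneg _), hcast, inv_mul_cancel₀ (by positivity),
          Real.rpow_one]
      rw [hrpow]
      by_cases hsgn : 0 ≤ c + tail p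
      · rw [if_pos hsgn, one_pow, one_mul, abs_of_nonneg hsgn]
        ring
      · rw [if_neg hsgn, (hodd p).neg_one_pow, abs_of_neg (lt_of_not_ge hsgn)]
        ring
    -- limit of the closed form
    have hmod : Filter.Tendsto (fun p : ℕ => M * |c + tail p| ^ (((2 * (p:ℝ) + 1))⁻¹))
        Filter.atTop (nhds M) := by
      have habs : Filter.Tendsto (fun p => |c + tail p|) Filter.atTop (nhds |c|) :=
        hcp.abs
      have hinv : Filter.Tendsto (fun p : ℕ => ((2 * (p:ℝ) + 1))⁻¹) Filter.atTop (nhds 0) := by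
        apply tendsto_inv_atTop_zero.comp
        apply Filter.tendsto_atTop_mono (fun p : ℕ => ?_) tendsto_natCast_atTop_atTop
        have : (0:ℝ) ≤ p := Nat.cast_nonneg p
        linarith
      have := (habs.rpow hinv (Or.inl (abs_ne_zero.mpr hcne))).const_mul M
      simpa using this
    rcases lt_or_gt_of_ne hcne with hneg | hpos
    · -- c < 0, limit is -M and FF = inf' = -M
      have hev : r =ᶠ[Filter.atTop]
          (fun p : ℕ => -(M * |c + tail p| ^ (((2 * (p:ℝ) + 1))⁻¹))) := by
        filter_upwards [hcp.eventually_lt_const (by linarith : c < 0)] with p hp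
        rw [hrval p, if_neg (not_le.mpr hp)]
        ring
      have hlim : Filter.Tendsto r Filter.atTop (nhds (-M)) :=
        Filter.Tendsto.congr' hev.symm hmod.neg
      have hFF : FF I x = -M := by
        have hξMneg : xiF I x M < 0 := by
          rcases lt_trichotomy (xiF I x M) 0 with h' | h' | h'
          · exact h'
          · exact absurd h' hξM
          · exfalso; rw [hc] at hneg; exact_mod_cast absurd (Int.cast_pos.mpr h') (not_lt.mpr (le_of_lt hneg))
        rw [FF]
        rw [dif_pos h, if_neg (not_lt.mpr (le_of_lt hξMneg)), if_pos hξMneg]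
        -- inf' J x = -M
        have hξnegM : 0 < xiF I x (-M) := by rw [xiF_neg]; omega
        have hcard : 0 < (I.filter fun i => x i = -M).card := by
          rw [xiF] at hξnegM
          by_contra hcon
          simp only [not_lt, Nat.le_zero] at hcon
          rw [hcon] at hξnegM
          omega
        obtain ⟨i, hi⟩ := Finset.card_pos.mp hcard
        rcases Finset.mem_filter.mp hi with ⟨hiI, hix⟩
        have hiJ : i ∈ J := Finset.mem_filter.mpr ⟨hiI, by
          rw [hix, xiF_neg]; omega⟩
        apply le_antisymm
        · exact le_trans (Finset.inf'_le x hiJ) (le_of_eq hix)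
        · apply Finset.le_inf'
          intro j hjJ
          have : |x j| ≤ M := Finset.le_sup' (fun i => |x i|) hjJ
          have := neg_abs_le (x j)
          linarith
      rw [hFF]; exact hlim
    · -- c > 0
      have hev : r =ᶠ[Filter.atTop]
          (fun p : ℕ => M * |c + tail p| ^ (((2 * (p:ℝ) + 1))⁻¹)) := by
        filter_upwards [hcp.eventually_const_lt (by linarith : (0:ℝ) < c)] with p hp
        rw [hrval p, if_pos (le_of_lt hp), one_mul]
      have hlim : Filter.Tendsto r Filter.atTop (nhds M) :=
        Filter.Tendsto.congr' hev.symm hmod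
      have hFF : FF I x = M := by
        have hξMpos : 0 < xiF I x M := by
          rcases lt_trichotomy (xiF I x M) 0 with h' | h' | h'
          · exfalso; rw [hc] at hpos
            have : (xiF I x M : ℝ) < 0 := by exact_mod_cast h'
            linarith
          · exact absurd h' hξM
          · exact h'
        rw [FF, dif_pos h, if_pos hξMpos]
        have hcard : 0 < (I.filter fun i => x i = M).card := by
          rw [xiF] at hξMpos
          by_contra hcon
          simp only [not_lt, Nat.le_zero] at hcon
          rw [hcon] at hξMpos
          omega
        obtain ⟨i, hi⟩ := Finset.card_pos.mp hcard
        rcases Finset.mem_filter.mp hi with ⟨hiI, hix⟩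
        have hiJ : i ∈ J := Finset.mem_filter.mpr ⟨hiI, by rw [hix]; omega⟩
        apply le_antisymm
        · apply Finset.sup'_le
          intro j hjJ
          have : |x j| ≤ M := Finset.le_sup' (fun i => |x i|) hjJ
          have := le_abs_self (x j)
          linarith
        · exact le_trans (le_of_eq hix.symm) (Finset.le_sup' x hiJ)
      rw [hFF]; exact hlim
  · -- degenerate case: all signed counts vanish
    have hall : ∀ i ∈ I, xiF I x (x i) = 0 := by
      intro i hiI
      by_contra hcon
      exact h ⟨i, Finset.mem_filter.mpr ⟨hiI, hcon⟩⟩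
    have hS : ∀ p : ℕ, ∑ i ∈ I, (x i) ^ (2 * p + 1) = 0 := by
      intro p
      rw [hgroup p]
      refine Finset.sum_eq_zero fun α hα => ?_
      rcases Finset.mem_filter.mp hα with ⟨hαim, hαpos⟩
      rcases Finset.mem_image.mp hαim with ⟨i, hiI, rfl⟩
      have : xiF I x |x i| = 0 := by
        by_contra hcon
        rcases abs_choice (x i) with hc | hc
        · rw [hc] at hcon; exact hcon (hall i hiI)
        · rw [hc, xiF_neg] at hcon
          exact hcon (by rw [hall i hiI]; ring)
      rw [this]
      simp
    have hr0 : ∀ p, r p = 0 := by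
      intro p
      have := hr p
      rw [hS p] at this
      exact pow_eq_zero_iff (by omega) |>.mp this
    have hFF : FF I x = 0 := by rw [FF, dif_neg h]
    rw [hFF]
    have : r = fun _ => (0:ℝ) := funext hr0
    rw [this]
    exact tendsto_const_nhds
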